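/- The function r(k) = (k+2)·ln(1+k)/(2k) is strictly increasing on (0, ∞), i.e., its derivative (k(k+2)/(k+1) − 2·ln(1+k))/(2k²) is positive for all k > 0. -/

import Mathlib

open Real Set

lemma key_pos (k : ℝ) (hk : 0 < k) :
    (k * (k + 2) / (k + 1) - 2 * Real.log (1 + k)) / (2 * k ^ 2) > 0 := by
  have hx : (0:ℝ) < 1 + k := by linarith
  have h1 : Real.log (1 + k) < Real.sinh (Real.log (1 + k)) :=
    Real.self_lt_sinh_iff.mpr (Real.log_pos (by linarith))
  rw [Real.sinh_log hx] at h1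
  have h2 : k * (k + 2) / (k + 1) = (1 + k) - (1 + k)⁻¹ := by
    field_simp; ring
  have hnum : 0 < k * (k + 2) / (k + 1) - 2 * Real.log (1 + k) := by
    rw [h2]; linarith
  positivity

lemma hasDeriv (k : ℝ) (hk : 0 < k) :
    HasDerivAt (fun k : ℝ => (k + 2) * Real.log (1 + k) / (2 * k))
      ((k * (k + 2) / (k + 1) - 2 * Real.log (1 + k)) / (2 * k ^ 2)) k := by
  have hx : (0:ℝ) < 1 + k := by linarith
  have hlog : HasDerivAt (fun k : ℝ => Real.log (1 + k)) (1 / (1 + k)) k := by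
    have := (Real.hasDerivAt_log (ne_of_gt hx)).comp k
      ((hasDerivAt_const k (1:ℝ)).add (hasDerivAt_id k))
    simpa [one_div, Function.comp_def] using this
  have hN : HasDerivAt (fun k : ℝ => (k + 2) * Real.log (1 + k))
      (1 * Real.log (1 + k) + (k + 2) * (1 / (1 + k))) k := by
    simpa [Pi.mul_def, Pi.add_def] using ((hasDerivAt_id k).add (hasDerivAt_const k 2)).mul hlog
  have hD : HasDerivAt (fun k : ℝ => 2 * k) 2 k := by
    simpa using (hasDerivAt_id k).const_mul (2:ℝ)
  have hdiv : HasDerivAt (fun k : ℝ => (k + 2) * Real.log (1 + k) / (2 * k)) _ k :=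
    hN.div hD (by positivity)
  convert hdiv using 1
  have hk0 : k ≠ 0 := ne_of_gt hk
  have hk1 : k + 1 ≠ 0 := by linarith
  field_simp
  ring

theorem revenue_ratio_increasing :
    StrictMonoOn (fun k : ℝ => (k + 2) * Real.log (1 + k) / (2 * k)) (Ioi (0:ℝ)) ∧
    ∀ k : ℝ, 0 < k → (k * (k + 2) / (k + 1) - 2 * Real.log (1 + k)) / (2 * k ^ 2) > 0 := by
  constructor
  · apply StrictMonoOn.mono (s := Ioi (0:ℝ)) ?_ (le_refl _)
    apply strictMonoOn_of_deriv_pos (convex_Ioi 0)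
    · intro x hx
      exact ((hasDeriv x hx).continuousAt).continuousWithinAt
    · intro x hx
      rw [interior_Ioi] at hx
      rw [(hasDeriv x hx).deriv]
      exact key_pos x hx
  · exact key_pos
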